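/- Let F be a finite field with |F| = Q and char(F) ≠ 2, let M ∈ GL(2, F) have irreducible characteristic polynomial over F and multiplicative order Q² − 1, and set H̄ = ⟨M^{Q−1}⟩. Then the action of H̄ on the set of 1-dimensional subspaces of F² has exactly two orbits, each of cardinality (Q + 1)/2. -/

import Mathlib

open Module

/-- The action of `A ∈ GL(n, F)` on subspaces of `F^n`: `U · A` is the image of `U`
under the invertible linear map given by the matrix `A`. -/
noncomputable def mapGL {F : Type*} [Field F] {n : ℕ}
    (A : GL (Fin n) F) (U : Submodule F (Fin n → F)) : Submodule F (Fin n → F) :=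
  U.map (Matrix.toLin' (A : Matrix (Fin n) (Fin n) F))

section SingerAux

open Matrix Polynomial

variable {F : Type*} [Field F]

private lemma sub_comm_helper' {R : Type*} [Ring R] {a b c : R} (ha : a * c = c * a)
    (hb : b * c = c * b) : (a - b) * c = c * (a - b) := by
  rw [sub_mul, mul_sub, ha, hb]

private lemma smul_one_comm' {n : ℕ} (c : F) (A : Matrix (Fin n) (Fin n) F) :
    (c • 1 : Matrix (Fin n) (Fin n) F) * A = A * (c • 1) := by
  rw [smul_mul_assoc, one_mul, mul_smul_comm, mul_one]

private lemma zpow_val_comm' (M : GL (Fin 2) F) (z : ℤ) :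
    ((M ^ z : GL (Fin 2) F) : Matrix (Fin 2) (Fin 2) F) * (M : Matrix (Fin 2) (Fin 2) F)
      = (M : Matrix (Fin 2) (Fin 2) F) * ((M ^ z : GL (Fin 2) F) : Matrix (Fin 2) (Fin 2) F) := by
  have h : (M ^ z) * M = M * (M ^ z) := ((Commute.refl M).zpow_left z).eq
  calc ((M ^ z : GL (Fin 2) F) : Matrix (Fin 2) (Fin 2) F) * (M : Matrix (Fin 2) (Fin 2) F)
      = (((M ^ z) * M : GL (Fin 2) F) : Matrix (Fin 2) (Fin 2) F) := by rw [Units.val_mul]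
    _ = ((M * (M ^ z) : GL (Fin 2) F) : Matrix (Fin 2) (Fin 2) F) := by rw [h]
    _ = _ := by rw [Units.val_mul]

private lemma mapGL_mapGL' {n : ℕ} (A B : GL (Fin n) F) (U : Submodule F (Fin n → F)) :
    mapGL A (mapGL B U) = mapGL (A * B) U := by
  unfold mapGL
  rw [← Submodule.map_comp, ← Matrix.toLin'_mul, ← Units.val_mul]

private lemma mapGL_one' {n : ℕ} (U : Submodule F (Fin n → F)) :
    mapGL (1 : GL (Fin n) F) U = U := by
  unfold mapGL
  simp [Matrix.toLin'_one]

private lemma mapGL_span' {n : ℕ} (A : GL (Fin n) F) (v : Fin n → F) :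
    mapGL A (Submodule.span F {v}) =
      Submodule.span F {(A : Matrix (Fin n) (Fin n) F).mulVec v} := by
  unfold mapGL
  rw [Submodule.map_span, Set.image_singleton, Matrix.toLin'_apply]

private lemma mapGL_scalar' {n : ℕ} {A : GL (Fin n) F} {c : F} (hc : c ≠ 0)
    (h : (A : Matrix (Fin n) (Fin n) F) = c • 1) (U : Submodule F (Fin n → F)) :
    mapGL A U = U := by
  unfold mapGL
  rw [h]
  ext x
  simp only [Submodule.mem_map, Matrix.toLin'_apply, Matrix.smul_mulVec,
    Matrix.one_mulVec]
  constructor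
  · rintro ⟨y, hy, rfl⟩; exact U.smul_mem c hy
  · intro hx; exact ⟨c⁻¹ • x, U.smul_mem _ hx, by rw [smul_smul, mul_inv_cancel₀ hc, one_smul]⟩

private lemma mapGL_pow_pow' (g : GL (Fin 2) F) (x y : ℤ) (U : Submodule F (Fin 2 → F)) :
    mapGL (g ^ x) (mapGL (g ^ y) U) = mapGL (g ^ (x + y)) U := by
  rw [mapGL_mapGL', ← _root_.zpow_add]

private lemma mapGL_zpow_eq_iff' (g : GL (Fin 2) F) (a b : ℤ) (U W : Submodule F (Fin 2 → F)) :
    mapGL (g ^ a) U = mapGL (g ^ b) W ↔ mapGL (g ^ (a - b)) U = W := by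
  constructor
  · intro h
    have := congrArg (mapGL (g ^ (-b))) h
    rw [mapGL_pow_pow', mapGL_pow_pow', neg_add_cancel, zpow_zero, mapGL_one'] at this
    rwa [neg_add_eq_sub] at this
  · rintro rfl
    rw [mapGL_pow_pow', show b + (a - b) = a by ring]

private lemma GL_mulVec_ne_zero' (A : GL (Fin 2) F) {v : Fin 2 → F} (hv : v ≠ 0) :
    (A : Matrix (Fin 2) (Fin 2) F).mulVec v ≠ 0 := by
  intro h0
  apply hv
  have h1 : v = ((((A⁻¹ : GL (Fin 2) F)) : Matrix (Fin 2) (Fin 2) F)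
      * (A : Matrix (Fin 2) (Fin 2) F)).mulVec v := by
    rw [← Units.val_mul, inv_mul_cancel, Units.val_one, Matrix.one_mulVec]
  rw [← Matrix.mulVec_mulVec, h0, Matrix.mulVec_zero] at h1
  exact h1

/-- Schur-type kernel lemma: a matrix commuting with `M` that kills a nonzero vector
is zero, provided the characteristic polynomial of `M` is irreducible. -/
private lemma comm_kernel' (M : GL (Fin 2) F)
    (hirr : Irreducible (Matrix.charpoly (M : Matrix (Fin 2) (Fin 2) F)))
    (N : Matrix (Fin 2) (Fin 2) F)
    (hNM : N * (M : Matrix (Fin 2) (Fin 2) F) = (M : Matrix (Fin 2) (Fin 2) F) * N)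
    {v : Fin 2 → F} (hv : v ≠ 0) (h0 : N.mulVec v = 0) : N = 0 := by
  by_contra hN
  set f := Matrix.toLin' N with hf
  have hftriv : f ≠ 0 := by
    intro h
    apply hN
    have : Matrix.toLin' N = Matrix.toLin' (0 : Matrix (Fin 2) (Fin 2) F) := by
      simpa [hf] using h
    exact Matrix.toLin'.injective this
  have hker_ne_top : LinearMap.ker f ≠ ⊤ := fun h => hftriv (LinearMap.ker_eq_top.mp h)
  have hvker : v ∈ LinearMap.ker f := by simp [hf, Matrix.toLin'_apply, h0]
  have hsp : Submodule.span F {v} ≤ LinearMap.ker f := by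
    rw [Submodule.span_le]; simpa using hvker
  have h1 : finrank F (Submodule.span F {v}) = 1 := finrank_span_singleton hv
  have h2 : finrank F (LinearMap.ker f) < 2 := by
    have := Submodule.finrank_lt (K := F) hker_ne_top
    rwa [finrank_fin_fun] at this
  have h3 : 1 ≤ finrank F (LinearMap.ker f) := h1 ▸ Submodule.finrank_mono hsp
  have hker : Submodule.span F {v} = LinearMap.ker f :=
    Submodule.eq_of_le_of_finrank_eq hsp (by omega)
  have hMv : (M : Matrix (Fin 2) (Fin 2) F).mulVec v ∈ LinearMap.ker f := by
    rw [LinearMap.mem_ker, hf, Matrix.toLin'_apply, Matrix.mulVec_mulVec, hNM,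
      ← Matrix.mulVec_mulVec, h0, Matrix.mulVec_zero]
  rw [← hker, Submodule.mem_span_singleton] at hMv
  obtain ⟨c, hc⟩ := hMv
  have hdet : (c • (1 : Matrix (Fin 2) (Fin 2) F) - (M : Matrix (Fin 2) (Fin 2) F)).det = 0 := by
    rw [← Matrix.exists_mulVec_eq_zero_iff]
    refine ⟨v, hv, ?_⟩
    rw [Matrix.sub_mulVec, Matrix.smul_mulVec, Matrix.one_mulVec, hc, sub_self]
  have heval : (Matrix.charpoly (M : Matrix (Fin 2) (Fin 2) F)).eval c = 0 := by
    rw [Matrix.charpoly, ← Polynomial.coe_evalRingHom, RingHom.map_det]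
    convert hdet using 2
    ext i j
    by_cases h : i = j <;>
      simp [Matrix.charmatrix_apply, RingHom.mapMatrix_apply, Matrix.map_apply, h,
        Matrix.one_apply, Matrix.diagonal_apply]
  obtain ⟨q, hq⟩ :=
    (Polynomial.dvd_iff_isRoot (p := Matrix.charpoly (M : Matrix (Fin 2) (Fin 2) F))).mpr heval
  rcases hirr.isUnit_or_isUnit hq with h | h
  · exact Polynomial.not_isUnit_X_sub_C c h
  · have hd : (Matrix.charpoly (M : Matrix (Fin 2) (Fin 2) F)).natDegree = 2 := by
      simpa using Matrix.charpoly_natDegree_eq_dim (M : Matrix (Fin 2) (Fin 2) F)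
    have hq0 : q ≠ 0 := h.ne_zero
    have : (Matrix.charpoly (M : Matrix (Fin 2) (Fin 2) F)).natDegree = 1 := by
      rw [hq, Polynomial.natDegree_mul (Polynomial.X_sub_C_ne_zero c) hq0,
        Polynomial.natDegree_X_sub_C, Polynomial.natDegree_eq_zero_of_isUnit h]
    omega

private lemma zpow_scalar' (u : GL (Fin 2) F) {c : F} (hc : c ≠ 0)
    (h : (u : Matrix (Fin 2) (Fin 2) F) = c • 1) (t : ℤ) :
    ∃ d : F, d ≠ 0 ∧ ((u ^ t : GL (Fin 2) F) : Matrix (Fin 2) (Fin 2) F) = d • 1 := by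
  have hpow : ∀ k : ℕ, ((u ^ k : GL (Fin 2) F) : Matrix (Fin 2) (Fin 2) F) = c ^ k • 1 := by
    intro k
    rw [Units.val_pow_eq_pow_val, h, _root_.smul_pow, one_pow]
  rcases t with n | n
  · exact ⟨c ^ n, pow_ne_zero n hc, by rw [Int.ofNat_eq_coe, zpow_natCast]; exact hpow n⟩
  · refine ⟨(c ^ (n + 1))⁻¹, inv_ne_zero (pow_ne_zero _ hc), ?_⟩
    rw [zpow_negSucc]
    apply Units.inv_eq_of_mul_eq_one_right
    rw [hpow, smul_mul_assoc, one_mul, smul_smul, mul_inv_cancel₀ (pow_ne_zero _ hc), one_smul]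

/-- A power of a Singer cycle squaring to the identity is `±1`. -/
private lemma pm_one' (M : GL (Fin 2) F)
    (hirr : Irreducible (Matrix.charpoly (M : Matrix (Fin 2) (Fin 2) F)))
    (A : GL (Fin 2) F) (k : ℕ) (hA : A = M ^ k) (hA2 : A ^ 2 = 1) :
    A = 1 ∨ (A : Matrix (Fin 2) (Fin 2) F) = -1 := by
  by_cases h1 : A = 1
  · exact Or.inl h1
  by_cases h2 : (A : Matrix (Fin 2) (Fin 2) F) = -1
  · exact Or.inr h2
  exfalso
  have hval2 : (A : Matrix (Fin 2) (Fin 2) F) ^ 2 = 1 := by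
    rw [← Units.val_pow_eq_pow_val, hA2, Units.val_one]
  have hfact : ((A : Matrix (Fin 2) (Fin 2) F) - 1) * ((A : Matrix (Fin 2) (Fin 2) F) + 1) = 0 := by
    have : ((A : Matrix (Fin 2) (Fin 2) F) - 1) * ((A : Matrix (Fin 2) (Fin 2) F) + 1)
        = (A : Matrix (Fin 2) (Fin 2) F) ^ 2 - 1 := by noncomm_ring
    rw [this, hval2, sub_self]
  have hAp1 : (A : Matrix (Fin 2) (Fin 2) F) + 1 ≠ 0 := by
    intro h; exact h2 (by linear_combination (norm := noncomm_ring) h)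
  have hexu : ∃ u : Fin 2 → F, ((A : Matrix (Fin 2) (Fin 2) F) + 1).mulVec u ≠ 0 := by
    by_contra hall
    push_neg at hall
    apply hAp1
    have : Matrix.toLin' ((A : Matrix (Fin 2) (Fin 2) F) + 1)
        = Matrix.toLin' (0 : Matrix (Fin 2) (Fin 2) F) := by
      refine LinearMap.ext fun u => ?_
      rw [Matrix.toLin'_apply, Matrix.toLin'_apply, hall, Matrix.zero_mulVec]
    exact Matrix.toLin'.injective this
  obtain ⟨u, hu⟩ := hexu
  have hcommA : (A : Matrix (Fin 2) (Fin 2) F) * (M : Matrix (Fin 2) (Fin 2) F)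
      = (M : Matrix (Fin 2) (Fin 2) F) * (A : Matrix (Fin 2) (Fin 2) F) := by
    subst hA
    have h : (M ^ k) * M = M * (M ^ k) := ((Commute.refl M).pow_left k).eq
    calc ((M ^ k : GL (Fin 2) F) : Matrix (Fin 2) (Fin 2) F) * (M : Matrix (Fin 2) (Fin 2) F)
        = (((M ^ k) * M : GL (Fin 2) F) : Matrix (Fin 2) (Fin 2) F) := by rw [Units.val_mul]
      _ = ((M * (M ^ k) : GL (Fin 2) F) : Matrix (Fin 2) (Fin 2) F) := by rw [h]
      _ = _ := by rw [Units.val_mul]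
  have hN : (A : Matrix (Fin 2) (Fin 2) F) - 1 = 0 := by
    apply comm_kernel' M hirr _ ?_ hu
    · rw [Matrix.mulVec_mulVec, hfact, Matrix.zero_mulVec]
    · have h1c : (1 : Matrix (Fin 2) (Fin 2) F) * (M : Matrix (Fin 2) (Fin 2) F)
          = (M : Matrix (Fin 2) (Fin 2) F) * 1 := by rw [one_mul, mul_one]
      rw [sub_mul, mul_sub, hcommA, h1c]
  rw [sub_eq_zero] at hN
  exact h1 (Units.ext (by rw [hN, Units.val_one]))

variable [Fintype F]

private lemma scalar_dvd' (M : GL (Fin 2) F)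
    (hord : orderOf M = Fintype.card F ^ 2 - 1) (hQ : 3 ≤ Fintype.card F)
    (z : ℤ) {c : F} (hc : c ≠ 0)
    (h : ((M ^ z : GL (Fin 2) F) : Matrix (Fin 2) (Fin 2) F) = c • 1) :
    ((Fintype.card F : ℤ) + 1) ∣ z := by
  set Q := Fintype.card F with hQdef
  have h1 : ((M ^ z) ^ (Q - 1) : GL (Fin 2) F) = 1 := by
    apply Units.ext
    rw [Units.val_pow_eq_pow_val, h, _root_.smul_pow, one_pow,
      FiniteField.pow_card_sub_one_eq_one c hc, one_smul]
    rfl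
  have h2 : M ^ (z * ((Q : ℤ) - 1)) = 1 := by
    have hcast : ((Q - 1 : ℕ) : ℤ) = (Q : ℤ) - 1 := by
      have : 1 ≤ Q := by omega
      push_cast [this]; ring
    rw [← hcast, _root_.zpow_mul, zpow_natCast, h1]
  have h3 : ((orderOf M : ℤ)) ∣ z * ((Q : ℤ) - 1) := orderOf_dvd_iff_zpow_eq_one.mpr h2
  rw [hord] at h3
  have hcast2 : ((Q ^ 2 - 1 : ℕ) : ℤ) = ((Q : ℤ) + 1) * ((Q : ℤ) - 1) := by
    have : 1 ≤ Q ^ 2 := by nlinarith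
    push_cast [this]; ring
  rw [hcast2] at h3
  have hne : ((Q : ℤ) - 1) ≠ 0 := by
    have : (3 : ℤ) ≤ (Q : ℤ) := by exact_mod_cast hQ
    omega
  exact (mul_dvd_mul_iff_right hne).mp h3

private lemma fix_scalar' (M : GL (Fin 2) F)
    (hirr : Irreducible (Matrix.charpoly (M : Matrix (Fin 2) (Fin 2) F)))
    (z : ℤ) {v : Fin 2 → F} (hv : v ≠ 0)
    (h : mapGL (M ^ z) (Submodule.span F {v}) = Submodule.span F {v}) :
    ∃ c : F, c ≠ 0 ∧ ((M ^ z : GL (Fin 2) F) : Matrix (Fin 2) (Fin 2) F) = c • 1 := by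
  rw [mapGL_span'] at h
  have hmem : ((M ^ z : GL (Fin 2) F) : Matrix (Fin 2) (Fin 2) F).mulVec v
      ∈ Submodule.span F {v} := by
    rw [← h]; exact Submodule.mem_span_singleton_self _
  rw [Submodule.mem_span_singleton] at hmem
  obtain ⟨c, hc⟩ := hmem
  have hc0 : c ≠ 0 := by
    rintro rfl
    rw [zero_smul] at hc
    exact GL_mulVec_ne_zero' (M ^ z) hv hc.symm
  refine ⟨c, hc0, ?_⟩
  have hN : ((M ^ z : GL (Fin 2) F) : Matrix (Fin 2) (Fin 2) F) - c • 1 = 0 := by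
    apply comm_kernel' M hirr _ ?_ hv
    · rw [Matrix.sub_mulVec, Matrix.smul_mulVec, Matrix.one_mulVec, hc, sub_self]
    · exact sub_comm_helper' (zpow_val_comm' M z) (smul_one_comm' c _)
  exact sub_eq_zero.mp hN

private lemma vec_trans' (M : GL (Fin 2) F)
    (hirr : Irreducible (Matrix.charpoly (M : Matrix (Fin 2) (Fin 2) F)))
    (hord : orderOf M = Fintype.card F ^ 2 - 1) (hQ : 3 ≤ Fintype.card F)
    {w : Fin 2 → F} (hw : w ≠ 0) :
    ∀ v : Fin 2 → F, v ≠ 0 → ∃ k : ℕ, k < Fintype.card F ^ 2 - 1 ∧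
      ((M : Matrix (Fin 2) (Fin 2) F) ^ k).mulVec w = v := by
  classical
  set Q := Fintype.card F with hQdef
  set n := Q ^ 2 - 1 with hn
  haveI : NeZero n := ⟨by rw [hn]; exact Nat.sub_ne_zero_of_lt (by nlinarith)⟩
  set f : ZMod n → {v : Fin 2 → F // v ≠ 0} := fun k =>
    ⟨((M : Matrix (Fin 2) (Fin 2) F) ^ k.val).mulVec w, by
      intro h0
      apply hw
      have h1 : w = (((((M ^ k.val)⁻¹ : GL (Fin 2) F)) : Matrix (Fin 2) (Fin 2) F)
          * ((M : Matrix (Fin 2) (Fin 2) F) ^ k.val)).mulVec w := by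
        rw [← Units.val_pow_eq_pow_val, ← Units.val_mul, inv_mul_cancel, Units.val_one,
          Matrix.one_mulVec]
      rw [← Matrix.mulVec_mulVec, h0, Matrix.mulVec_zero] at h1
      exact h1⟩ with hf
  have hinj : Function.Injective f := by
    intro i j hij
    have h1 : ((M : Matrix (Fin 2) (Fin 2) F) ^ i.val).mulVec w
        = ((M : Matrix (Fin 2) (Fin 2) F) ^ j.val).mulVec w := congrArg Subtype.val hij
    have h2 : (M : Matrix (Fin 2) (Fin 2) F) ^ i.val = (M : Matrix (Fin 2) (Fin 2) F) ^ j.val := by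
      rw [← sub_eq_zero]
      apply comm_kernel' M hirr _ ?_ hw
      · rw [Matrix.sub_mulVec, h1, sub_self]
      · exact sub_comm_helper' (((Commute.refl _).pow_left _).eq) (((Commute.refl _).pow_left _).eq)
    have h3 : M ^ i.val = M ^ j.val :=
      Units.ext (by rw [Units.val_pow_eq_pow_val, Units.val_pow_eq_pow_val]; exact h2)
    have h4 : i.val ≡ j.val [MOD n] := by
      have := pow_eq_pow_iff_modEq.mp h3
      rwa [hord] at this
    have h5 : i.val = j.val := by
      have h6 := h4
      unfold Nat.ModEq at h6
      rwa [Nat.mod_eq_of_lt (ZMod.val_lt i), Nat.mod_eq_of_lt (ZMod.val_lt j)] at h6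
    exact ZMod.val_injective _ h5
  have hcards : Fintype.card (ZMod n) = Fintype.card {v : Fin 2 → F // v ≠ 0} := by
    rw [ZMod.card]
    have h6 : Fintype.card {v : Fin 2 → F // ¬ v = 0} =
        Fintype.card (Fin 2 → F) - Fintype.card {v : Fin 2 → F // v = 0} :=
      Fintype.card_subtype_compl _
    have h7 : Fintype.card (Fin 2 → F) = Q ^ 2 := by
      rw [Fintype.card_fun, Fintype.card_fin]
    have h8 : Fintype.card {v : Fin 2 → F // v = 0} = 1 := Fintype.card_subtype_eq 0
    have h9 : Fintype.card {v : Fin 2 → F // v ≠ 0}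
        = Fintype.card {v : Fin 2 → F // ¬ v = 0} := rfl
    rw [h9, h6, h7, h8]
  have hsurj : Function.Surjective f :=
    ((Fintype.bijective_iff_injective_and_card f).mpr ⟨hinj, hcards⟩).2
  intro v hv
  obtain ⟨k, hk⟩ := hsurj ⟨v, hv⟩
  exact ⟨k.val, ZMod.val_lt k, congrArg Subtype.val hk⟩

/-- `M ^ (Q + 1)` is a scalar matrix. -/
private lemma pow_card_add_one_scalar' (M : GL (Fin 2) F)
    (hirr : Irreducible (Matrix.charpoly (M : Matrix (Fin 2) (Fin 2) F)))
    (hord : orderOf M = Fintype.card F ^ 2 - 1) (hQ : 3 ≤ Fintype.card F)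
    {w : Fin 2 → F} (hw : w ≠ 0) :
    ∃ c : F, c ≠ 0 ∧ ((M ^ (Fintype.card F + 1) : GL (Fin 2) F) : Matrix (Fin 2) (Fin 2) F)
      = c • 1 := by
  classical
  set Q := Fintype.card F with hQdef
  have vec_trans := vec_trans' M hirr hord hQ hw
  have key : ∀ c : {c : F // c ≠ 0}, ∃ k : ℕ, k < Q ^ 2 - 1 ∧
      ((M : Matrix (Fin 2) (Fin 2) F) ^ k) = (c : F) • 1 ∧ (Q + 1) ∣ k := by
    intro c
    obtain ⟨k, hklt, hk⟩ := vec_trans ((c : F) • w) (smul_ne_zero c.2 hw)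
    have hscal : ((M : Matrix (Fin 2) (Fin 2) F) ^ k) = (c : F) • 1 := by
      rw [← sub_eq_zero]
      apply comm_kernel' M hirr _ ?_ hw
      · rw [Matrix.sub_mulVec, hk, Matrix.smul_mulVec, Matrix.one_mulVec, sub_self]
      · exact sub_comm_helper' (((Commute.refl _).pow_left _).eq) (smul_one_comm' _ _)
    refine ⟨k, hklt, hscal, ?_⟩
    have hdvd : ((Q : ℤ) + 1) ∣ (k : ℤ) := by
      apply scalar_dvd' M hord hQ (k : ℤ) c.2
      rw [zpow_natCast, Units.val_pow_eq_pow_val, hscal]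
    exact_mod_cast hdvd
  choose k hklt hkscal hkdvd using key
  set g : {c : F // c ≠ 0} → Fin (Q - 1) := fun c =>
    ⟨k c / (Q + 1), by
      have hfact : (Q + 1) * (Q - 1) = Q ^ 2 - 1 := by
        have h := Nat.sq_sub_sq Q 1
        simpa using h.symm
      exact Nat.div_lt_of_lt_mul (by rw [hfact]; exact hklt c)⟩ with hg
  have hginj : Function.Injective g := by
    intro c c' hcc
    have h1 : k c / (Q + 1) = k c' / (Q + 1) := congrArg Fin.val hcc
    have h2 : k c = k c' := by
      rw [← Nat.div_mul_cancel (hkdvd c), ← Nat.div_mul_cancel (hkdvd c'), h1]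
    have h3 : ((c : F) • (1 : Matrix (Fin 2) (Fin 2) F)) = ((c' : F) • 1) := by
      rw [← hkscal c, ← hkscal c', h2]
    have h4 : (c : F) = (c' : F) := by
      have := congrFun (congrFun h3 0) 0
      simpa [Matrix.smul_apply, Matrix.one_apply] using this
    exact Subtype.ext h4
  have hcards : Fintype.card {c : F // c ≠ 0} = Fintype.card (Fin (Q - 1)) := by
    rw [Fintype.card_fin]
    have h6 : Fintype.card {c : F // ¬ c = 0} =
        Fintype.card F - Fintype.card {c : F // c = 0} := Fintype.card_subtype_compl _
    have h8 : Fintype.card {c : F // c = 0} = 1 := Fintype.card_subtype_eq 0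
    have h9 : Fintype.card {c : F // c ≠ 0} = Fintype.card {c : F // ¬ c = 0} := rfl
    rw [h9, h6, h8]
  have hgsurj : Function.Surjective g :=
    ((Fintype.bijective_iff_injective_and_card g).mpr ⟨hginj, hcards⟩).2
  obtain ⟨c, hc⟩ := hgsurj ⟨1, by omega⟩
  have h1 : k c / (Q + 1) = 1 := congrArg Fin.val hc
  have h2 : k c = Q + 1 := by
    rw [← Nat.div_mul_cancel (hkdvd c), h1, one_mul]
  refine ⟨c, c.2, ?_⟩
  rw [Units.val_pow_eq_pow_val, ← h2, hkscal c]

end SingerAux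

/-- Let `F` be a finite field with `|F| = Q` of odd characteristic,
`M ∈ GL(2, F)` a Singer cycle (irreducible characteristic polynomial and order `Q² − 1`),
and `H̄ = ⟨M^{Q−1}⟩`. Then the action of `H̄` on the lines of `F²` has exactly two orbits,
each of cardinality `(Q + 1)/2`. -/
theorem singer_subgroup_two_orbits_on_lines_char_ne_two
    {F : Type*} [Field F] [Fintype F] (hchar : ringChar F ≠ 2)
    (M : GL (Fin 2) F)
    (hirr : Irreducible (Matrix.charpoly (M : Matrix (Fin 2) (Fin 2) F)))
    (hord : orderOf M = Fintype.card F ^ 2 - 1) :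
    {Ω : Set (Submodule F (Fin 2 → F)) | ∃ l : Submodule F (Fin 2 → F), finrank F l = 1 ∧
        Ω = {l' | ∃ A ∈ Subgroup.zpowers (M ^ (Fintype.card F - 1)),
          l' = mapGL A l}}.ncard = 2
    ∧ ∀ l : Submodule F (Fin 2 → F), finrank F l = 1 →
        {l' | ∃ A ∈ Subgroup.zpowers (M ^ (Fintype.card F - 1)),
          l' = mapGL A l}.ncard = (Fintype.card F + 1) / 2 := by
  classical
  set Q := Fintype.card F with hQdef
  -- numerics
  haveI := ringChar.charP F
  obtain ⟨n, hp, hcard⟩ := FiniteField.card F (ringChar F)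
  have hodd : Odd Q := by rw [hQdef, hcard]; exact (hp.odd_of_ne_two hchar).pow
  have hQ3 : 3 ≤ Q := by
    have h1 : 3 ≤ ringChar F := by
      have h2 := hp.two_le
      omega
    have h2 : ringChar F ≤ ringChar F ^ (n : ℕ) := Nat.le_self_pow n.pos.ne' _
    rw [hQdef, hcard]; omega
  obtain ⟨r, hr⟩ := hodd
  set m := r + 1 with hmdef
  have hm : Q + 1 = 2 * m := by omega
  have hm2 : 2 ≤ m := by omega
  haveI : NeZero m := ⟨by omega⟩
  set g := M ^ (Q - 1) with hgdef
  -- base vector and base line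
  set v₀ : Fin 2 → F := Pi.single 0 1 with hv₀def
  have hv₀ : v₀ ≠ 0 := by
    intro h
    have := congrFun h 0
    simp [hv₀def] at this
  set l₀ := Submodule.span F {v₀} with hl₀def
  set l₁ := mapGL M l₀ with hl₁def
  -- scalar matrix M^(Q+1)
  obtain ⟨c₁, hc₁, hscal₁⟩ := pow_card_add_one_scalar' M hirr hord hQ3 hv₀
  have hvec := vec_trans' M hirr hord hQ3 hv₀
  have hQc : ((Q - 1 : ℕ) : ℤ) = (Q : ℤ) - 1 := by omega
  -- even shift: mapGL (M^(2t)) U = mapGL (g^(-t)) U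
  have heven : ∀ (t : ℤ) (U : Submodule F (Fin 2 → F)),
      mapGL (M ^ (2 * t)) U = mapGL (g ^ (-t)) U := by
    intro t U
    have h1 : (M : GL (Fin 2) F) ^ (2 * t) = (M ^ (Q + 1)) ^ t * g ^ (-t) := by
      rw [hgdef, ← zpow_natCast M (Q + 1), ← zpow_natCast M (Q - 1), ← _root_.zpow_mul,
        ← _root_.zpow_mul, ← _root_.zpow_add]
      congr 1
      rw [hQc]
      push_cast
      ring
    rw [h1, ← mapGL_mapGL']
    obtain ⟨d, hd, hdeq⟩ := zpow_scalar' (M ^ (Q + 1)) hc₁ hscal₁ t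
    rw [mapGL_scalar' hd hdeq]
  -- fixing criterion for the H-action
  have hfix : ∀ (v : Fin 2 → F), v ≠ 0 → ∀ j : ℤ,
      (mapGL (g ^ j) (Submodule.span F {v}) = Submodule.span F {v} ↔ (m : ℤ) ∣ j) := by
    intro v hv j
    constructor
    · intro h
      have h1 : (g : GL (Fin 2) F) ^ j = M ^ (((Q : ℤ) - 1) * j) := by
        rw [hgdef, ← zpow_natCast M (Q - 1), ← _root_.zpow_mul, hQc]
      rw [h1] at h
      obtain ⟨c, hc0, hcs⟩ := fix_scalar' M hirr _ hv h
      obtain ⟨t, ht⟩ := scalar_dvd' M hord hQ3 _ hc0 hcs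
      have hQm : (Q : ℤ) = 2 * (m : ℤ) - 1 := by omega
      rw [hQm] at ht
      have hdbl : (2 : ℤ) * (((m : ℤ) - 1) * j) = 2 * ((m : ℤ) * t) := by
        linear_combination ht
      have hmj : (m : ℤ) ∣ ((m : ℤ) - 1) * j :=
        ⟨t, mul_left_cancel₀ two_ne_zero hdbl⟩
      have h5 : (m : ℤ) ∣ (m : ℤ) * j - ((m : ℤ) - 1) * j :=
        dvd_sub (dvd_mul_right _ _) hmj
      rwa [show (m : ℤ) * j - ((m : ℤ) - 1) * j = j from by ring] at h5
    · rintro ⟨t, rfl⟩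
      have hA2 : (g ^ m) ^ 2 = 1 := by
        rw [hgdef, ← pow_mul, ← pow_mul]
        have hexp : (Q - 1) * (m * 2) = Q ^ 2 - 1 := by
          have hfact : (Q + 1) * (Q - 1) = Q ^ 2 - 1 := by
            have h := Nat.sq_sub_sq Q 1
            simpa using h.symm
          calc (Q - 1) * (m * 2) = (Q - 1) * (2 * m) := by ring
            _ = (Q - 1) * (Q + 1) := by rw [← hm]
            _ = (Q + 1) * (Q - 1) := by ring
            _ = Q ^ 2 - 1 := hfact
        rw [hexp, ← hord]
        exact pow_orderOf_eq_one M
      have hgm : g ^ ((m : ℤ) * t) = (g ^ m) ^ t := by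
        rw [_root_.zpow_mul, zpow_natCast]
      rcases pm_one' M hirr (g ^ m) ((Q - 1) * m) (by rw [hgdef, pow_mul]) hA2 with h1 | h1
      · rw [hgm, h1, one_zpow, mapGL_one']
      · have h2 : ((g ^ m : GL (Fin 2) F) : Matrix (Fin 2) (Fin 2) F) = (-1 : F) • 1 := by
          rw [h1, neg_smul, one_smul]
        obtain ⟨d, hd, hdeq⟩ := zpow_scalar' (g ^ m) (neg_ne_zero.mpr one_ne_zero) h2 t
        rw [hgm, mapGL_scalar' hd hdeq]
  -- lines are spans of nonzero vectors
  have hline : ∀ l : Submodule F (Fin 2 → F), finrank F l = 1 →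
      ∃ v : Fin 2 → F, v ≠ 0 ∧ l = Submodule.span F {v} := by
    intro l hl
    have hbot : l ≠ ⊥ := by
      intro h
      rw [h] at hl
      simp [finrank_bot] at hl
    obtain ⟨v, hvl, hv⟩ := (Submodule.ne_bot_iff l).mp hbot
    have hle : Submodule.span F {v} ≤ l := by rw [Submodule.span_le]; simpa using hvl
    exact ⟨v, hv, (Submodule.eq_of_le_of_finrank_eq hle
      (by rw [finrank_span_singleton hv, hl])).symm⟩
  -- orbit notation
  let Orb : Submodule F (Fin 2 → F) → Set (Submodule F (Fin 2 → F)) := fun l =>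
    {l' | ∃ A ∈ Subgroup.zpowers g, l' = mapGL A l}
  show ({Ω : Set (Submodule F (Fin 2 → F)) | ∃ l : Submodule F (Fin 2 → F),
      finrank F l = 1 ∧ Ω = Orb l}.ncard = 2)
    ∧ ∀ l : Submodule F (Fin 2 → F), finrank F l = 1 → (Orb l).ncard = (Q + 1) / 2
  have hΩmem : ∀ l l' : Submodule F (Fin 2 → F),
      l' ∈ Orb l ↔ ∃ z : ℤ, mapGL (g ^ z) l = l' := by
    intro l l'
    constructor
    · rintro ⟨A, hA, rfl⟩
      obtain ⟨z, hz⟩ := Subgroup.mem_zpowers_iff.mp hA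
      exact ⟨z, by rw [hz]⟩
    · rintro ⟨z, hz⟩
      exact ⟨g ^ z, Subgroup.mem_zpowers_iff.mpr ⟨z, rfl⟩, hz.symm⟩
  have hΩself : ∀ l, l ∈ Orb l := fun l =>
    (hΩmem l l).mpr ⟨0, by rw [zpow_zero, mapGL_one']⟩
  have hΩtrans : ∀ l l', l' ∈ Orb l → Orb l' = Orb l := by
    intro l l' h
    obtain ⟨z0, hz0⟩ := (hΩmem l l').mp h
    ext x
    rw [hΩmem, hΩmem]
    constructor
    · rintro ⟨z, hz⟩
      exact ⟨z + z0, by rw [← hz, ← hz0, mapGL_pow_pow']⟩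
    · rintro ⟨z, hz⟩
      refine ⟨z - z0, ?_⟩
      rw [← hz0, mapGL_pow_pow', sub_add_cancel, hz]
  -- orbit cardinality
  have horb : ∀ (v : Fin 2 → F), v ≠ 0 →
      (Orb (Submodule.span F {v})).ncard = m := by
    intro v hv
    set f : ZMod m → Submodule F (Fin 2 → F) := fun j =>
      mapGL (g ^ (j.val : ℤ)) (Submodule.span F {v}) with hfdef
    have hrange : Orb (Submodule.span F {v}) = Set.range f := by
      ext x
      rw [hΩmem]
      constructor
      · rintro ⟨z, hz⟩
        refine ⟨(z : ZMod m), ?_⟩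
        have hdvd : (m : ℤ) ∣ (((z : ZMod m).val : ℤ) - z) := by
          rw [← ZMod.intCast_zmod_eq_zero_iff_dvd]
          push_cast
          rw [ZMod.natCast_val, ZMod.cast_id]
          exact sub_self _
        have heq : mapGL (g ^ (((z : ZMod m).val : ℤ))) (Submodule.span F {v})
            = mapGL (g ^ z) (Submodule.span F {v}) := by
          rw [mapGL_zpow_eq_iff']
          exact (hfix v hv _).mpr hdvd
        rw [hfdef]
        dsimp only
        rw [heq, hz]
      · rintro ⟨j, hj⟩
        exact ⟨(j.val : ℤ), hj⟩
    have hfinj : Function.Injective f := by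
      intro i j hij
      rw [hfdef] at hij
      dsimp only at hij
      rw [mapGL_zpow_eq_iff'] at hij
      have hdvd := (hfix v hv _).mp hij
      have h8 := (ZMod.intCast_zmod_eq_zero_iff_dvd _ m).mpr hdvd
      push_cast at h8
      rw [ZMod.natCast_val, ZMod.cast_id, ZMod.natCast_val, ZMod.cast_id] at h8
      exact sub_eq_zero.mp h8
    rw [hrange]
    have h9 := Nat.card_range_of_injective hfinj
    rw [Nat.card_zmod] at h9
    exact h9
  -- ranks of base lines
  have hl₀rank : finrank F l₀ = 1 := by rw [hl₀def]; exact finrank_span_singleton hv₀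
  have hl₁rank : finrank F l₁ = 1 := by
    rw [hl₁def, hl₀def, mapGL_span']
    exact finrank_span_singleton (GL_mulVec_ne_zero' M hv₀)
  -- every line is in one of the two orbits
  have hcover : ∀ l : Submodule F (Fin 2 → F), finrank F l = 1 →
      l ∈ Orb l₀ ∨ l ∈ Orb l₁ := by
    intro l hl
    obtain ⟨w, hw, rfl⟩ := hline l hl
    obtain ⟨k, hklt, hk⟩ := hvec w hw
    have hlk : Submodule.span F {w} = mapGL (M ^ (k : ℤ)) l₀ := by
      rw [zpow_natCast, hl₀def, mapGL_span', Units.val_pow_eq_pow_val, hk]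
    rcases Nat.even_or_odd k with ⟨t, ht⟩ | ⟨t, ht⟩
    · left
      rw [hΩmem]
      refine ⟨-(t : ℤ), ?_⟩
      rw [← heven (t : ℤ) l₀, show (2 * (t : ℤ)) = (k : ℤ) from by omega, hlk]
    · right
      rw [hΩmem]
      refine ⟨-(t : ℤ), ?_⟩
      rw [← heven (t : ℤ) l₁, hl₁def, mapGL_mapGL']
      have h1 : (M : GL (Fin 2) F) ^ (2 * (t : ℤ)) * M = M ^ (k : ℤ) := by
        rw [← zpow_add_one]
        congr 1
        omega
      rw [h1, hlk]
  -- the two orbits are distinct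
  have hne : Orb l₀ ≠ Orb l₁ := by
    intro heq
    have h1 : l₁ ∈ Orb l₀ := heq ▸ hΩself l₁
    obtain ⟨z, hz⟩ := (hΩmem l₀ l₁).mp h1
    have h2 : mapGL (M ^ (((Q : ℤ) - 1) * z)) l₀ = mapGL (M ^ (1 : ℤ)) l₀ := by
      rw [zpow_one, ← hl₁def, ← hz]
      congr 1
      rw [hgdef, ← zpow_natCast M (Q - 1), ← _root_.zpow_mul, hQc]
    rw [mapGL_zpow_eq_iff'] at h2
    rw [hl₀def] at h2
    obtain ⟨c, hc0, hcs⟩ := fix_scalar' M hirr _ hv₀ h2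
    have h3 := scalar_dvd' M hord hQ3 _ hc0 hcs
    have h4 : (2 : ℤ) ∣ (Q : ℤ) + 1 := ⟨(m : ℤ), by omega⟩
    have h5 : (2 : ℤ) ∣ ((Q : ℤ) - 1) * z := Dvd.dvd.mul_right ⟨(m : ℤ) - 1, by omega⟩ z
    have h6 := dvd_sub h5 (dvd_trans h4 h3)
    rw [show ((Q : ℤ) - 1) * z - (((Q : ℤ) - 1) * z - 1) = 1 from by ring] at h6
    norm_num at h6
  constructor
  · -- exactly two orbits
    have hSeq : {Ω : Set (Submodule F (Fin 2 → F)) | ∃ l : Submodule F (Fin 2 → F),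
        finrank F l = 1 ∧ Ω = Orb l} = {Orb l₀, Orb l₁} := by
      ext X
      constructor
      · rintro ⟨l, hl, rfl⟩
        rcases hcover l hl with h | h
        · left; exact (hΩtrans _ _ h)
        · right; exact (hΩtrans _ _ h)
      · rintro (rfl | rfl)
        · exact ⟨l₀, hl₀rank, rfl⟩
        · exact ⟨l₁, hl₁rank, rfl⟩
    rw [hSeq]
    exact Set.ncard_pair hne
  · -- each orbit has (Q+1)/2 elements
    intro l hl
    obtain ⟨v, hv, rfl⟩ := hline l hl
    rw [horb v hv]
    omega
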